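/- Let n = 2r + 1 be an odd positive integer. Then the ℂ-vector space of functions ZMod n → ℂ is the internal direct sum of the line ℂ·f_0 and the subspaces V_s for 1 ≤ s ≤ r; each V_s is two-dimensional and invariant under every λ_t, and ℂ·f_0 is invariant under every λ_t. (This is the decomposition ℂR_n = ℂ(1,1) ⊕ ⨁_{s=1}^{(n−1)/2} W(ω_n^{2s}) of the regular quandle representation of R_n for odd n.) -/

import Mathlib

/-- The regular representation of the dihedral quandle `R_n = Quandle.dihedral n`
(`ZMod n` with `x ◃ y = 2y - x`) on functions `ZMod n → ℂ`:
`(λ_t f)(x) = f (2t - x)`. -/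
def lam (n : ℕ) (t : ZMod n) (f : ZMod n → ℂ) : ZMod n → ℂ :=
  fun x => f (2 * t - x)

/-- `ω = exp(2πi/n)`. -/
noncomputable def dihedralOmega (n : ℕ) : ℂ :=
  Complex.exp (2 * Real.pi * Complex.I / n)

/-- The character `f_s : ZMod n → ℂ`, `f_s(x) = ω^{s·x.val}`. -/
noncomputable def chi (n : ℕ) (s : ℤ) : ZMod n → ℂ :=
  fun x => dihedralOmega n ^ (s * (x.val : ℤ))

/-- `V_s`: the `ℂ`-linear span of `{f_s, f_{-s}}` in `ZMod n → ℂ`. -/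
noncomputable def Vsub (n : ℕ) (s : ℤ) : Submodule ℂ (ZMod n → ℂ) :=
  Submodule.span ℂ {chi n s, chi n (-s)}


section helpers
variable {n : ℕ}

lemma omega_prim (hn : n ≠ 0) : IsPrimitiveRoot (dihedralOmega n) n := by
  have := Complex.isPrimitiveRoot_exp n hn
  simpa [dihedralOmega] using this

lemma omega_zpow_congr (hn : n ≠ 0) {a b : ℤ} (h : a ≡ b [ZMOD (n : ℤ)]) :
    dihedralOmega n ^ a = dihedralOmega n ^ b := by
  have hz : dihedralOmega n ≠ 0 := (omega_prim hn).ne_zero hn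
  have hd : (n : ℤ) ∣ a - b := Int.ModEq.dvd h.symm
  have h1 : dihedralOmega n ^ (a - b) = 1 :=
    ((omega_prim hn).zpow_eq_one_iff_dvd (a - b)).mpr hd
  have hab : a = b + (a - b) := by ring
  rw [hab, zpow_add₀ hz, h1, mul_one]

lemma chi_congr (hn : n ≠ 0) {s t : ℤ} (h : s ≡ t [ZMOD (n : ℤ)]) :
    chi n s = chi n t := by
  funext x
  exact omega_zpow_congr hn (h.mul_right _)

lemma val_sub_congr [NeZero n] (t x : ZMod n) :
    (((2 * t - x).val : ℤ)) ≡ 2 * (t.val : ℤ) - (x.val : ℤ) [ZMOD (n : ℤ)] := by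
  rw [← ZMod.intCast_eq_intCast_iff]
  push_cast
  simp [ZMod.natCast_val, ZMod.cast_id]

lemma lam_chi (hn : n ≠ 0) (t : ZMod n) (s : ℤ) :
    lam n t (chi n s) = (dihedralOmega n ^ (2 * s * (t.val : ℤ))) • chi n (-s) := by
  haveI : NeZero n := ⟨hn⟩
  funext x
  show dihedralOmega n ^ (s * (((2 * t - x).val : ℤ)))
      = dihedralOmega n ^ (2 * s * (t.val : ℤ)) * dihedralOmega n ^ ((-s) * (x.val : ℤ))
  rw [← zpow_add₀ ((omega_prim hn).ne_zero hn)]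
  apply omega_zpow_congr hn
  calc s * (((2 * t - x).val : ℤ)) ≡ s * (2 * (t.val : ℤ) - (x.val : ℤ)) [ZMOD (n:ℤ)] :=
        (val_sub_congr t x).mul_left s
    _ = 2 * s * (t.val : ℤ) + (-s) * (x.val : ℤ) := by ring

/-- the character family -/
noncomputable def vfam (n : ℕ) : ZMod n → (ZMod n → ℂ) := fun k => chi n (k.val : ℤ)

lemma vfam_li (hn : n ≠ 0) : LinearIndependent ℂ (vfam n) := by
  haveI : NeZero n := ⟨hn⟩
  have h1 : ∀ k : ZMod n, (dihedralOmega n ^ (k.val : ℕ)) ^ n = 1 := by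
    intro k
    rw [← pow_mul, mul_comm, pow_mul, (omega_prim hn).pow_eq_one, one_pow]
  set g : ZMod n → AddChar (ZMod n) ℂ := fun k => AddChar.zmodChar n (h1 k) with hg
  have hinj : Function.Injective g := by
    intro k l hkl
    have := congrArg (fun ψ : AddChar (ZMod n) ℂ => ψ 1) hkl
    simp only [hg, AddChar.zmodChar_apply] at this
    rcases eq_or_lt_of_le (Nat.one_le_iff_ne_zero.mpr hn) with h1n | h1n
    · have hn1 : n = 1 := h1n.symm
      subst hn1
      exact Subsingleton.elim k l
    · haveI hf : Fact (1 < n) := ⟨h1n⟩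
      have hv1 : (1 : ZMod n).val = 1 := ZMod.val_one n
      rw [hv1, pow_one, pow_one] at this
      have := (omega_prim hn).pow_inj k.val_lt l.val_lt this
      exact ZMod.val_injective n this
  have hli := (AddChar.linearIndependent (ZMod n) ℂ).comp g hinj
  have : (DFunLike.coe ∘ g) = vfam n := by
    funext k x
    simp only [Function.comp_apply, hg, AddChar.zmodChar_apply, vfam, chi]
    rw [← pow_mul, ← zpow_natCast]
    push_cast
    ring_nf
  rwa [this] at hli

end helpers

section more
variable {n : ℕ}

lemma vfam_eq_chi (hn : n ≠ 0) {a : ZMod n} {z : ℤ} (h : (z : ZMod n) = a) :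
    vfam n a = chi n z := by
  haveI : NeZero n := ⟨hn⟩
  apply chi_congr hn
  rw [← ZMod.intCast_eq_intCast_iff]
  simp [ZMod.natCast_val, ZMod.cast_id, h]

lemma span_range_vfam (hn : n ≠ 0) :
    Submodule.span ℂ (Set.range (vfam n)) = ⊤ := by
  haveI : NeZero n := ⟨hn⟩
  have hcard : Fintype.card (ZMod n) = Module.finrank ℂ (ZMod n → ℂ) :=
    (Module.finrank_fintype_fun_eq_card ℂ).symm
  rw [← coe_basisOfLinearIndependentOfCardEqFinrank (vfam_li hn) hcard]
  exact (basisOfLinearIndependentOfCardEqFinrank (vfam_li hn) hcard).span_eq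

end more


/-- For odd `n = 2r + 1`, the space of functions `ZMod n → ℂ` is the internal
direct sum of the line `ℂ·f_0` and the subspaces `V_s`, `1 ≤ s ≤ r`; each `V_s`
is two-dimensional and invariant under every `λ_t`, and `ℂ·f_0` is invariant
under every `λ_t`.  This is the decomposition
`ℂR_n ≅ ℂ(1,1) ⊕ ⨁_{s=1}^{(n-1)/2} W(ω_n^{2s})` for odd `n`. -/
theorem regular_decomposition_odd (n r : ℕ) (hn : n = 2 * r + 1) :
    DirectSum.IsInternal (fun i : Fin (r + 1) =>
      if (i : ℕ) = 0 then (ℂ ∙ chi n 0) else Vsub n (i : ℕ)) ∧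
    (∀ s : ℤ, 1 ≤ s → s ≤ (r : ℤ) → Module.finrank ℂ (Vsub n s) = 2) ∧
    (∀ s : ℤ, 1 ≤ s → s ≤ (r : ℤ) → ∀ t : ZMod n, ∀ f ∈ Vsub n s, lam n t f ∈ Vsub n s) ∧
    (∀ t : ZMod n, ∀ f ∈ (ℂ ∙ chi n 0), lam n t f ∈ (ℂ ∙ chi n 0)) := by
  have hn0 : n ≠ 0 := by omega
  haveI : NeZero n := ⟨hn0⟩
  -- invariance of Vsub
  have hinv : ∀ s : ℤ, ∀ t : ZMod n, ∀ f ∈ Vsub n s, lam n t f ∈ Vsub n s := by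
    intro s t f hf
    have hg1 : lam n t (chi n s) ∈ Vsub n s := by
      rw [lam_chi hn0]
      exact Submodule.smul_mem _ _ (Submodule.subset_span (Or.inr rfl))
    have hg2 : lam n t (chi n (-s)) ∈ Vsub n s := by
      rw [lam_chi hn0, neg_neg]
      exact Submodule.smul_mem _ _ (Submodule.subset_span (Or.inl rfl))
    induction hf using Submodule.span_induction with
    | mem x hx => rcases hx with h | h
                  · rw [h] at *; exact hg1
                  · rw [Set.mem_singleton_iff] at h; rw [h]; exact hg2
    | zero => exact Submodule.zero_mem _
    | add x y hx hy ihx ihy => exact Submodule.add_mem _ ihx ihy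
    | smul a x hx ihx => exact Submodule.smul_mem _ a ihx
  -- invariance of the trivial line
  have htriv : ∀ t : ZMod n, ∀ f ∈ (ℂ ∙ chi n 0), lam n t f ∈ (ℂ ∙ chi n 0) := by
    intro t f hf
    have hg : lam n t (chi n 0) = chi n 0 := by
      funext x; simp [lam, chi]
    induction hf using Submodule.span_induction with
    | mem x hx => rw [Set.mem_singleton_iff] at hx; rw [hx, hg]
                  exact Submodule.mem_span_singleton_self _
    | zero => exact Submodule.zero_mem _
    | add x y hx hy ihx ihy => exact Submodule.add_mem _ ihx ihy
    | smul a x hx ihx => exact Submodule.smul_mem _ a ihx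
  -- finrank of Vsub
  have hrank : ∀ s : ℤ, 1 ≤ s → s ≤ (r : ℤ) → Module.finrank ℂ (Vsub n s) = 2 := by
    intro s hs1 hsr
    set k1 : ZMod n := ((s : ℤ) : ZMod n) with hk1
    set k2 : ZMod n := ((-s : ℤ) : ZMod n) with hk2
    have hc1 : vfam n k1 = chi n s := vfam_eq_chi hn0 rfl
    have hc2 : vfam n k2 = chi n (-s) := vfam_eq_chi hn0 rfl
    have hne : k1 ≠ k2 := by
      intro h
      have h2 : ((2 * s : ℤ) : ZMod n) = 0 := by
        push_cast
        rw [hk1, hk2] at h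
        push_cast at h
        linear_combination h
      rw [ZMod.intCast_zmod_eq_zero_iff_dvd] at h2
      have := Int.le_of_dvd (by omega) h2
      omega
    have hinj : Function.Injective ![k1, k2] := by
      intro i j hij
      fin_cases i <;> fin_cases j <;> simp_all
    have hli := (vfam_li hn0).comp ![k1, k2] hinj
    have hcomp : vfam n ∘ ![k1, k2] = ![chi n s, chi n (-s)] := by
      funext i
      fin_cases i <;> simp [hc1, hc2]
    rw [hcomp] at hli
    have hrange : Set.range ![chi n s, chi n (-s)] = {chi n s, chi n (-s)} := by
      ext f
      simp [Fin.exists_fin_two]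
      tauto
    have := finrank_span_eq_card hli
    rw [hrange] at this
    exact this
  refine ⟨?_, fun s h1 h2 => hrank s h1 h2, fun s h1 h2 => hinv s, htriv⟩
  -- the direct sum decomposition
  set A : Fin (r + 1) → Submodule ℂ (ZMod n → ℂ) := fun i =>
    if (i : ℕ) = 0 then (ℂ ∙ chi n 0) else Vsub n (i : ℕ) with hA
  set S : Fin (r + 1) → Set (ZMod n) := fun i =>
    if (i : ℕ) = 0 then {0} else {(((i : ℕ) : ℕ) : ZMod n), -(((i : ℕ) : ℕ) : ZMod n)} with hS
  -- val facts
  have hvalcast : ∀ m : ℕ, m < n → ((m : ZMod n)).val = m := fun m hm => ZMod.val_natCast_of_lt hm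
  have hvalneg : ∀ m : ℕ, 1 ≤ m → m ≤ r → (-(m : ZMod n)).val = n - m := by
    intro m h1 h2
    have he : -((m : ℕ) : ZMod n) = ((n - m : ℕ) : ZMod n) := by
      have : ((n - m : ℕ) : ZMod n) = ((n : ℕ) : ZMod n) - ((m : ℕ) : ZMod n) := by
        push_cast [Nat.cast_sub (by omega : m ≤ n)]; ring
      rw [this, ZMod.natCast_self, zero_sub]
    rw [he, hvalcast _ (by omega)]
  have hmemval : ∀ (i : Fin (r + 1)) (e : ZMod n), e ∈ S i →
      ((i : ℕ) = 0 ∧ e.val = 0) ∨ ((i : ℕ) ≠ 0 ∧ (e.val = (i : ℕ) ∨ e.val = n - (i : ℕ))) := by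
    intro i e he
    by_cases h0 : (i : ℕ) = 0
    · left
      refine ⟨h0, ?_⟩
      rw [hS] at he; simp only [h0, if_pos] at he
      simp only [Set.mem_singleton_iff] at he
      rw [he, ZMod.val_zero]
    · right
      refine ⟨h0, ?_⟩
      rw [hS] at he; simp only [h0, if_neg, Nat.cast_id] at he
      have hir : (i : ℕ) ≤ r := by omega
      rcases he with h | h
      · left; rw [h]; exact hvalcast _ (by omega)
      · right; rw [Set.mem_singleton_iff] at h; rw [h]
        exact hvalneg _ (by omega) hir
  have hSdisj : ∀ i j : Fin (r + 1), i ≠ j → Disjoint (S i) (S j) := by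
    intro i j hij
    rw [Set.disjoint_left]
    intro e hei hej
    have hi := hmemval i e hei
    have hj := hmemval j e hej
    have hij' : (i : ℕ) ≠ (j : ℕ) := fun h => hij (Fin.ext h)
    have hi' : (i : ℕ) ≤ r := by omega
    have hj' : (j : ℕ) ≤ r := by omega
    rcases hi with ⟨h1, h2⟩ | ⟨h1, h2⟩ <;> rcases hj with ⟨h3, h4⟩ | ⟨h3, h4⟩ <;> omega
  have hAS : ∀ i : Fin (r + 1), A i = Submodule.span ℂ (vfam n '' S i) := by
    intro i
    by_cases h0 : (i : ℕ) = 0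
    · rw [hA, hS]; simp only []
      rw [if_pos h0, if_pos h0, Set.image_singleton]
      congr 1
      have : vfam n (0 : ZMod n) = chi n 0 := vfam_eq_chi hn0 (by push_cast; ring)
      rw [this]
    · rw [hA, hS]; simp only [Nat.cast_id]
      rw [if_neg h0, if_neg h0, Set.image_pair]
      have e1 : vfam n (((i : ℕ) : ℕ) : ZMod n) = chi n (i : ℕ) :=
        vfam_eq_chi hn0 (by push_cast; ring)
      have e2 : vfam n (-(((i : ℕ) : ℕ) : ZMod n)) = chi n (-(i : ℕ)) :=
        vfam_eq_chi hn0 (by push_cast; ring)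
      rw [e1, e2]
      rfl
  apply DirectSum.isInternal_submodule_of_iSupIndep_of_iSup_eq_top
  · -- independence
    rw [iSupIndep_def]
    intro i
    rw [hAS i]
    have hle : (⨆ (j) (_ : j ≠ i), A j) ≤
        Submodule.span ℂ (vfam n '' ⋃ (j) (_ : j ≠ i), S j) := by
      refine iSup₂_le fun j hj => ?_
      rw [hAS j]
      exact Submodule.span_mono (Set.image_mono (Set.subset_biUnion_of_mem hj))
    refine Disjoint.mono_right hle ?_
    apply (vfam_li hn0).disjoint_span_image
    rw [Set.disjoint_iUnion_right]
    intro j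
    rw [Set.disjoint_iUnion_right]
    intro hj
    exact hSdisj i j (Ne.symm hj)
  · -- spanning
    rw [eq_top_iff, ← span_range_vfam hn0]
    rw [Submodule.span_le]
    rintro f ⟨k, rfl⟩
    by_cases hk : k.val ≤ r
    · set i : Fin (r + 1) := ⟨k.val, by omega⟩ with hi
      have hik : (i : ℕ) = k.val := rfl
      by_cases h0 : k.val = 0
      · have hv : vfam n k = chi n 0 := by
          apply vfam_eq_chi hn0
          have : ((k.val : ℕ) : ZMod n) = k := by
            simp [ZMod.natCast_val, ZMod.cast_id]
          rw [← this, h0]; push_cast; ring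
        have : vfam n k ∈ A i := by
          have hAi : A i = (ℂ ∙ chi n 0) := by
            rw [hA]; exact if_pos (by rw [hik]; exact h0)
          rw [hAi, hv]; exact Submodule.mem_span_singleton_self _
        exact SetLike.le_def.mp (le_iSup A i) this
      · have hv : vfam n k = chi n (k.val : ℤ) := rfl
        have : vfam n k ∈ A i := by
          have hAi : A i = Vsub n ((i : ℕ) : ℕ) := by
            rw [hA]; exact if_neg (by rw [hik]; exact h0)
          rw [hik] at hAi
          rw [hAi]
          exact Submodule.subset_span (Or.inl rfl)
        exact SetLike.le_def.mp (le_iSup A i) this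
    · set s : ℕ := n - k.val with hs
      have hk' : k.val < n := k.val_lt
      have hs1 : 1 ≤ s := by omega
      have hsr : s ≤ r := by omega
      set i : Fin (r + 1) := ⟨s, by omega⟩ with hi
      have hik : (i : ℕ) = s := rfl
      have hv : vfam n k = chi n (-(s : ℤ)) := by
        apply vfam_eq_chi hn0
        have h1 : ((s : ℕ) : ZMod n) = -((k.val : ℕ) : ZMod n) := by
          rw [hs]
          have : ((n - k.val : ℕ) : ZMod n) = ((n : ℕ) : ZMod n) - ((k.val : ℕ) : ZMod n) := by
            push_cast [Nat.cast_sub (le_of_lt hk')]; ring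
          rw [this, ZMod.natCast_self, zero_sub]
        have h2 : ((k.val : ℕ) : ZMod n) = k := by
          simp [ZMod.natCast_val, ZMod.cast_id]
        push_cast
        rw [h1, h2]; ring
      have : vfam n k ∈ A i := by
        have hAi : A i = Vsub n ((i : ℕ) : ℕ) := by
          rw [hA]; exact if_neg (by rw [hik]; omega)
        rw [hik] at hAi
        rw [hAi, hv]
        exact Submodule.subset_span (Or.inr rfl)
      exact SetLike.le_def.mp (le_iSup A i) this
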